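/- Given the even moment bounds E(M^{2p}) ≤ 2 (2p−1)!! (2nB²)^p for all integers p ≥ 1 for a nonnegative random variable M, it follows that P(M ≥ x) ≤ 2√e · exp(−x²/(4nB²)) for all x > 0. -/

import Mathlib

open MeasureTheory

lemma my_log_lb {y : ℝ} (hy : 0 ≤ y) :
    y - y^2/2 + y^3/3 - y^4/4 ≤ Real.log (1+y) := by
  set g : ℝ → ℝ := fun t => Real.log (1+t) - (t - t^2/2 + t^3/3 - t^4/4) with hg
  have hderiv : ∀ z : ℝ, 0 < z → HasDerivAt g (z^4/(1+z)) z := by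
    intro z hz
    have h1 : HasDerivAt (fun t : ℝ => Real.log (1+t)) (1+z)⁻¹ z := by
      have := (HasDerivAt.const_add 1 (hasDerivAt_id z)).log (by linarith : (1:ℝ)+z ≠ 0)
      simpa using this
    have h2 : HasDerivAt (fun t : ℝ => t - t^2/2 + t^3/3 - t^4/4)
        (1 - z + z^2 - z^3) z := by
      have := (((hasDerivAt_id z).sub ((hasDerivAt_pow 2 z).div_const 2)).add
        ((hasDerivAt_pow 3 z).div_const 3)).sub ((hasDerivAt_pow 4 z).div_const 4)
      refine this.congr_deriv ?_
      push_cast; ring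
    have h3 := h1.sub h2
    refine h3.congr_deriv ?_
    have hz1 : (1:ℝ)+z ≠ 0 := by linarith
    field_simp
    ring
  have hmono : MonotoneOn g (Set.Ici (0:ℝ)) := by
    apply monotoneOn_of_deriv_nonneg (convex_Ici 0)
    · apply ContinuousOn.sub
      · apply ContinuousOn.log (by fun_prop)
        intro t ht
        simp only [Set.mem_Ici] at ht
        linarith
      · fun_prop
    · rw [interior_Ici]
      intro z hz
      exact ((hderiv z hz).differentiableAt).differentiableWithinAt
    · rw [interior_Ici]
      intro z hz
      rw [(hderiv z hz).deriv]
      have : (0:ℝ) < z := hz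
      positivity
  have h0 : g 0 = 0 := by simp [hg]
  have := hmono (Set.self_mem_Ici) (Set.mem_Ici.2 hy) hy
  rw [h0] at this
  simp only [hg] at this
  linarith

lemma my_step (p : ℕ) : Real.exp 1 * (2*(p:ℝ)+1)^(p+1) ≤ (2*(p:ℝ)+3)^(p+1) := by
  match p with
  | 0 => simpa using (Real.exp_one_lt_d9.le.trans (by norm_num))
  | 1 =>
    have h := Real.exp_one_lt_d9.le
    norm_num
    nlinarith
  | (q+2) =>
    set p : ℕ := q + 2 with hp
    have hP : (2:ℝ) ≤ (p:ℝ) := by push_cast [hp]; linarith [Nat.cast_nonneg (α := ℝ) q]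
    set y : ℝ := 2/(2*(p:ℝ)+1) with hy
    have hy0 : 0 ≤ y := by positivity
    have h1y : 1 + y = (2*(p:ℝ)+3)/(2*(p:ℝ)+1) := by
      rw [hy]; field_simp; ring
    have hpoly : 1 ≤ ((p:ℝ)+1) * (y - y^2/2 + y^3/3 - y^4/4) := by
      have hm : (0:ℝ) < 2*(p:ℝ)+1 := by linarith
      rw [hy]
      rw [div_pow, div_pow, div_pow]
      rw [show ((p:ℝ)+1) * (2 / (2*(p:ℝ)+1) - 2^2/(2*(p:ℝ)+1)^2/2 + 2^3/(2*(p:ℝ)+1)^3/3 - 2^4/(2*(p:ℝ)+1)^4/4)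
        = ((p:ℝ)+1) * (2*(2*(p:ℝ)+1)^3 - 2*(2*(p:ℝ)+1)^2 + (8/3)*(2*(p:ℝ)+1) - 4) / (2*(p:ℝ)+1)^4 by field_simp; ring]
      rw [le_div_iff₀ (by positivity)]
      nlinarith [sq_nonneg ((p:ℝ)-2), sq_nonneg (p:ℝ), mul_pos hm hm]
    have hlog : 1 ≤ ((p:ℝ)+1) * Real.log (1+y) := by
      calc 1 ≤ ((p:ℝ)+1) * (y - y^2/2 + y^3/3 - y^4/4) := hpoly
        _ ≤ ((p:ℝ)+1) * Real.log (1+y) := by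
            apply mul_le_mul_of_nonneg_left (my_log_lb hy0) (by positivity)
    have hexp : Real.exp 1 ≤ (1+y)^(p+1) := by
      calc Real.exp 1 ≤ Real.exp (((p:ℝ)+1) * Real.log (1+y)) := Real.exp_le_exp.2 hlog
        _ = (1+y)^(p+1) := by
            have : ((p:ℝ)+1) = ((p+1 : ℕ) : ℝ) := by push_cast; ring
            rw [this, Real.exp_nat_mul, Real.exp_log (by positivity)]
    have hm : (0:ℝ) < 2*(p:ℝ)+1 := by linarith
    calc Real.exp 1 * (2*(p:ℝ)+1)^(p+1) ≤ (1+y)^(p+1) * (2*(p:ℝ)+1)^(p+1) := by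
          apply mul_le_mul_of_nonneg_right hexp (by positivity)
      _ = (2*(p:ℝ)+3)^(p+1) := by
          rw [h1y, ← mul_pow, div_mul_cancel₀ _ (ne_of_gt hm)]

lemma my_claimA : ∀ p : ℕ, (∏ k ∈ Finset.range p, (2*(k:ℝ)+1)) * Real.exp p ≤ (2*(p:ℝ)+1)^p := by
  intro p
  induction p with
  | zero => simp
  | succ q ih =>
    rw [Finset.prod_range_succ]
    have hD : (0:ℝ) ≤ ∏ k ∈ Finset.range q, (2*(k:ℝ)+1) := by
      apply Finset.prod_nonneg; intro k _; positivity
    have he : Real.exp ((q:ℝ)+1) = Real.exp q * Real.exp 1 := by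
      rw [← Real.exp_add]
    push_cast
    rw [he]
    calc (∏ k ∈ Finset.range q, (2*(k:ℝ)+1)) * (2*(q:ℝ)+1) * (Real.exp q * Real.exp 1)
        = ((∏ k ∈ Finset.range q, (2*(k:ℝ)+1)) * Real.exp q) * ((2*(q:ℝ)+1) * Real.exp 1) := by
          ring
      _ ≤ (2*(q:ℝ)+1)^q * ((2*(q:ℝ)+1) * Real.exp 1) := by
          apply mul_le_mul_of_nonneg_right ih (by positivity)
      _ = Real.exp 1 * (2*(q:ℝ)+1)^(q+1) := by ring
      _ ≤ (2*(q:ℝ)+3)^(q+1) := my_step q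
      _ = (2*((q:ℝ)+1)+1)^(q+1) := by ring_nf

lemma my_key (m : ℕ) (t : ℝ) (h1 : ((m:ℝ)+1) - 1/2 ≤ t) (h2 : t ≤ ((m:ℝ)+1) + 1/2) :
    (∏ k ∈ Finset.range (m+1), (2*(k:ℝ)+1)) * Real.exp (t - 1/2) ≤ (2*t)^(m+1) := by
  set p : ℕ := m + 1 with hpdef
  set P : ℝ := (p:ℝ) with hPdef
  have hP1 : (1:ℝ) ≤ P := by rw [hPdef, hpdef]; push_cast; linarith [Nat.cast_nonneg (α := ℝ) m]
  set D : ℝ := ∏ k ∈ Finset.range p, (2*(k:ℝ)+1) with hDdef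
  have hD : 0 < D := Finset.prod_pos (fun k _ => by positivity)
  have hPm1 : P = (m:ℝ)+1 := by rw [hPdef, hpdef]; push_cast; ring
  set l : ℝ := P + 1/2 - t with hldef
  have hl0 : 0 ≤ l := by rw [hldef, hPm1]; linarith
  have hl1 : l ≤ 1 := by rw [hldef, hPm1]; linarith
  have hPm : P - 1 = (m:ℝ) := by rw [hPdef, hpdef]; push_cast; ring
  have A2 : D * Real.exp P ≤ (2*P+1)^p := my_claimA p
  have A1 : D * Real.exp (P-1) ≤ (2*P-1)^p := by
    have h := my_claimA m
    have hsplit : D = (∏ k ∈ Finset.range m, (2*(k:ℝ)+1)) * (2*(m:ℝ)+1) := by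
      rw [hDdef, hpdef, Finset.prod_range_succ]
    have hm0 : (0:ℝ) ≤ 2*(m:ℝ)+1 := by positivity
    calc D * Real.exp (P-1)
        = ((∏ k ∈ Finset.range m, (2*(k:ℝ)+1)) * Real.exp m) * (2*(m:ℝ)+1) := by
          rw [hsplit, hPm]; ring
      _ ≤ (2*(m:ℝ)+1)^m * (2*(m:ℝ)+1) := mul_le_mul_of_nonneg_right h hm0
      _ = (2*(m:ℝ)+1)^(m+1) := by rw [pow_succ]
      _ = (2*P-1)^p := by rw [hPdef, hpdef]; push_cast; ring_nf
  have ha : (0:ℝ) < 2*P-1 := by linarith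
  have hb : (0:ℝ) < 2*P+1 := by linarith
  have hid : D * Real.exp (t-1/2) = (D * Real.exp (P-1))^l * (D * Real.exp P)^(1-l) := by
    rw [Real.mul_rpow hD.le (Real.exp_pos _).le, Real.mul_rpow hD.le (Real.exp_pos _).le,
      ← Real.exp_mul, ← Real.exp_mul,
      show D^l * Real.exp ((P-1)*l) * (D^(1-l) * Real.exp (P*(1-l)))
        = (D^l * D^(1-l)) * Real.exp ((P-1)*l + P*(1-l)) from by rw [Real.exp_add]; ring,
      ← Real.rpow_add hD, show l + (1-l) = (1:ℝ) from by ring, Real.rpow_one]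
    congr 1
    rw [hldef]; ring
  have hsw : ∀ (c : ℝ), 0 ≤ c → ∀ w : ℝ, (c^p)^w = (c^w)^p := by
    intro c hc w
    rw [← Real.rpow_natCast c p, ← Real.rpow_mul hc, mul_comm, Real.rpow_mul hc,
      Real.rpow_natCast]
  have hgm := Real.geom_mean_le_arith_mean2_weighted hl0 (by linarith) ha.le hb.le
    (by ring : l + (1-l) = 1)
  have h2t : l*(2*P-1) + (1-l)*(2*P+1) = 2*t := by rw [hldef]; ring
  calc D * Real.exp (t-1/2) = (D * Real.exp (P-1))^l * (D * Real.exp P)^(1-l) := hid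
    _ ≤ ((2*P-1)^p)^l * ((2*P+1)^p)^(1-l) :=
        mul_le_mul (Real.rpow_le_rpow (by positivity) A1 hl0)
          (Real.rpow_le_rpow (by positivity) A2 (by linarith))
          (by positivity) (by positivity)
    _ = ((2*P-1)^l * (2*P+1)^(1-l))^p := by
        rw [hsw _ ha.le, hsw _ hb.le, mul_pow]
    _ ≤ (2*t)^p := by
        apply pow_le_pow_left₀ (by positivity)
        rw [← h2t]; exact hgm

/-- If a nonnegative random variable `M` satisfies `E(M^(2p)) ≤ 2 (2p-1)!! (2nB²)^p`
for all integers `p ≥ 1`, then `P(M ≥ x) ≤ 2√e exp(-x²/(4nB²))` for all `x > 0`. -/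
theorem stmt_18 {Ω : Type*} [MeasurableSpace Ω]
    (μ : Measure Ω) [IsProbabilityMeasure μ]
    (M : Ω → ℝ) (hM : Measurable M) (hMnonneg : ∀ ω, 0 ≤ M ω)
    (B : ℝ) (hB : 0 < B) (n : ℕ) (hn : 1 ≤ n)
    (hint : ∀ p : ℕ, 1 ≤ p → Integrable (fun ω => M ω ^ (2 * p)) μ)
    (hmom : ∀ p : ℕ, 1 ≤ p →
      ∫ ω, M ω ^ (2 * p) ∂μ
        ≤ 2 * (∏ k ∈ Finset.range p, (2 * (k : ℝ) + 1)) * (2 * n * B ^ 2) ^ p) :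
    ∀ x : ℝ, 0 < x →
      μ {ω | x ≤ M ω}
        ≤ ENNReal.ofReal (2 * Real.sqrt (Real.exp 1) *
            Real.exp (-(x ^ 2) / (4 * n * B ^ 2))) := by
  intro x hx
  have hn' : (0:ℝ) < (n:ℝ) := by exact_mod_cast Nat.lt_of_lt_of_le Nat.zero_lt_one hn
  set σ2 : ℝ := 2*(n:ℝ)*B^2 with hσ2def
  have hσ2 : 0 < σ2 := by rw [hσ2def]; positivity
  set t : ℝ := x^2/(2*σ2) with htdef
  have ht0 : 0 < t := by rw [htdef]; positivity
  have h4n : (4:ℝ)*(n:ℝ)*B^2 ≠ 0 := by positivity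
  have hrhs : 2 * Real.sqrt (Real.exp 1) * Real.exp (-(x^2) / (4*(n:ℝ)*B^2))
      = 2 * Real.exp (1/2 - t) := by
    rw [show Real.sqrt (Real.exp 1) = Real.exp (1/2) from (Real.exp_half 1).symm,
      mul_assoc, ← Real.exp_add]
    congr 2
    rw [htdef, hσ2def]
    field_simp
    ring
  by_cases hc : t ≤ 1/2
  · calc μ {ω | x ≤ M ω} ≤ 1 := prob_le_one
      _ = ENNReal.ofReal 1 := ENNReal.ofReal_one.symm
      _ ≤ _ := by
          apply ENNReal.ofReal_le_ofReal
          rw [hrhs]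
          have h1 : (1:ℝ) ≤ Real.exp (1/2 - t) := Real.one_le_exp (by linarith)
          linarith
  · push_neg at hc
    set p : ℕ := ⌈t - 1/2⌉₊ with hpdef
    have hp1 : 1 ≤ p := Nat.one_le_ceil_iff.2 (by linarith)
    obtain ⟨m, hm⟩ : ∃ m, p = m + 1 := ⟨p - 1, by omega⟩
    have hceil1 : t - 1/2 ≤ (p:ℝ) := Nat.le_ceil _
    have hceil2 : (p:ℝ) < (t - 1/2) + 1 := Nat.ceil_lt_add_one (by linarith)
    have hsetEq : {ω | x ≤ M ω} = {ω | x^(2*p) ≤ M ω^(2*p)} := by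
      ext ω
      simp only [Set.mem_setOf_eq]
      exact (pow_le_pow_iff_left₀ hx.le (hMnonneg ω) (by omega)).symm
    have hmark := mul_meas_ge_le_integral_of_nonneg
      (μ := μ) (f := fun ω => M ω ^ (2*p))
      (Filter.Eventually.of_forall (fun ω => pow_nonneg (hMnonneg ω) _)) (hint p hp1) (x^(2*p))
    have hI := hmom p hp1
    have hxp : 0 < x^(2*p) := by positivity
    set D : ℝ := ∏ k ∈ Finset.range p, (2*(k:ℝ)+1) with hDdef
    have hDpos : 0 < D := Finset.prod_pos fun k _ => by positivity
    have htoReal : (μ {ω | x ≤ M ω}).toReal ≤ 2 * D * σ2^p / x^(2*p) := by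
      rw [hsetEq, le_div_iff₀ hxp]
      calc (μ {ω | x^(2*p) ≤ M ω^(2*p)}).toReal * x^(2*p)
          = x^(2*p) * (μ {ω | x^(2*p) ≤ M ω^(2*p)}).toReal := mul_comm _ _
        _ ≤ ∫ ω, M ω ^ (2*p) ∂μ := hmark
        _ ≤ 2 * D * σ2^p := hI
    have hx2 : x^2 = 2*t*σ2 := by
      rw [htdef]
      field_simp
    have hxpow : x^(2*p) = (2*t)^p * σ2^p := by
      rw [pow_mul, hx2, mul_pow]
    have hkey : D * Real.exp (t - 1/2) ≤ (2*t)^p := by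
      have h1' : ((m:ℝ)+1) - 1/2 ≤ t := by
        have : (p:ℝ) = (m:ℝ)+1 := by rw [hm]; push_cast; ring
        rw [← this]; linarith
      have h2' : t ≤ ((m:ℝ)+1) + 1/2 := by
        have : (p:ℝ) = (m:ℝ)+1 := by rw [hm]; push_cast; ring
        rw [← this]; linarith
      have := my_key m t h1' h2'
      rw [← hm] at this
      exact this
    have h2tp : D ≤ Real.exp (1/2 - t) * (2*t)^p := by
      calc D = D * Real.exp (t - 1/2) * Real.exp (1/2 - t) := by
            rw [mul_assoc, ← Real.exp_add]; norm_num
        _ ≤ (2*t)^p * Real.exp (1/2 - t) :=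
            mul_le_mul_of_nonneg_right hkey (Real.exp_pos _).le
        _ = Real.exp (1/2 - t) * (2*t)^p := mul_comm _ _
    have hfinal : 2 * D * σ2^p / x^(2*p) ≤ 2 * Real.exp (1/2 - t) := by
      rw [hxpow, div_le_iff₀ (by positivity)]
      calc 2 * D * σ2^p ≤ 2 * (Real.exp (1/2 - t) * (2*t)^p) * σ2^p := by
            apply mul_le_mul_of_nonneg_right _ (by positivity)
            linarith
        _ = 2 * Real.exp (1/2 - t) * ((2*t)^p * σ2^p) := by ring
    rw [← ENNReal.ofReal_toReal (measure_ne_top μ _)]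
    apply ENNReal.ofReal_le_ofReal
    rw [hrhs]
    exact htoReal.trans hfinal
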